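/- Let m ≥ 1 be a natural number and let s be a real number with s > -m. Then Σ_{k=m}^{∞} k · (2m+s)·Γ(m+s+2+s/m)·Γ(k+s) / (m·Γ(m+s)·Γ(k+s+3+s/m)) = 2m; that is, the average vertex degree of the L-graph with parameters (m,s) equals 2m. -/

import Mathlib

set_option maxHeartbeats 1000000

open Filter Real Finset Topology

/-- The closed-form L-graph vertex degree distribution has mean degree
`Σ_{k=m}^∞ k·Q_k = 2m`. -/
theorem L_vdd_closed_form_mean_degree (m : ℕ) (hm : 1 ≤ m) (s : ℝ) (hs : -(m : ℝ) < s) :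
    ∑' n : ℕ,
      ((m + n : ℕ) : ℝ) *
        ((2 * m + s) * Real.Gamma (m + s + 2 + s / m) * Real.Gamma ((m + n : ℕ) + s) /
          (m * Real.Gamma (m + s) * Real.Gamma ((m + n : ℕ) + s + 3 + s / m))) =
      2 * m := by
  have hm0 : (0:ℝ) < m := by exact_mod_cast hm
  have hms : (0:ℝ) < m + s := by linarith
  have h2ms : (0:ℝ) < 2 * m + s := by linarith
  have hsm : (-1:ℝ) < s / m := by
    rw [lt_div_iff₀ hm0]; linarith
  -- abbreviations
  set α : ℝ := (m:ℝ) / (m + s) with hα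
  set β : ℝ := s * (m:ℝ)^2 / ((2 * m + s) * (m + s)) with hβ
  set C : ℝ := (2 * m + s) * Real.Gamma (m + s + 2 + s / m) / (m * Real.Gamma (m + s)) with hC
  set t : ℝ := 1 + s / m with hts
  have ht : 0 < t := by rw [hts]; linarith
  set g : ℕ → ℝ := fun n => C * (α * ((m:ℝ) + n) + β) * Real.Gamma ((m:ℝ) + n + s)
      / Real.Gamma ((m:ℝ) + n + s + 2 + s / m) with hg
  set f : ℕ → ℝ := fun n => ((m + n : ℕ) : ℝ) *
        ((2 * m + s) * Real.Gamma (m + s + 2 + s / m) * Real.Gamma ((m + n : ℕ) + s) /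
          (m * Real.Gamma (m + s) * Real.Gamma ((m + n : ℕ) + s + 3 + s / m))) with hf
  have hGms : 0 < Real.Gamma ((m:ℝ) + s) := Real.Gamma_pos_of_pos hms
  have hGM : 0 < Real.Gamma ((m:ℝ) + s + 2 + s / m) := by
    apply Real.Gamma_pos_of_pos; linarith
  have hx : ∀ n : ℕ, (0:ℝ) < (m:ℝ) + n + s := by
    intro n
    have : (0:ℝ) ≤ n := Nat.cast_nonneg n
    linarith
  have hX : ∀ n : ℕ, (0:ℝ) < (m:ℝ) + n + s + 2 + s / m := by
    intro n; have := hx n; linarith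
  have hG1 : ∀ n : ℕ, 0 < Real.Gamma ((m:ℝ) + n + s) := fun n => Real.Gamma_pos_of_pos (hx n)
  have hG2 : ∀ n : ℕ, 0 < Real.Gamma ((m:ℝ) + n + s + 2 + s / m) :=
    fun n => Real.Gamma_pos_of_pos (hX n)
  -- telescoping identity
  have key : ∀ n : ℕ, f n = g n - g (n + 1) := by
    intro n
    have e1 : Real.Gamma (((m + n : ℕ) : ℝ) + s + 3 + s / m)
        = ((m:ℝ) + n + s + 2 + s / m) * Real.Gamma ((m:ℝ) + n + s + 2 + s / m) := by
      have : (((m + n : ℕ) : ℝ) + s + 3 + s / m) = ((m:ℝ) + n + s + 2 + s / m) + 1 := by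
        push_cast; ring
      rw [this, Real.Gamma_add_one (ne_of_gt (hX n))]
    have e2 : Real.Gamma ((m:ℝ) + (n + 1 : ℕ) + s)
        = ((m:ℝ) + n + s) * Real.Gamma ((m:ℝ) + n + s) := by
      have : ((m:ℝ) + (n + 1 : ℕ) + s) = ((m:ℝ) + n + s) + 1 := by push_cast; ring
      rw [this, Real.Gamma_add_one (ne_of_gt (hx n))]
    have e3 : Real.Gamma ((m:ℝ) + (n + 1 : ℕ) + s + 2 + s / m)
        = ((m:ℝ) + n + s + 2 + s / m) * Real.Gamma ((m:ℝ) + n + s + 2 + s / m) := by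
      have : ((m:ℝ) + (n + 1 : ℕ) + s + 2 + s / m) = ((m:ℝ) + n + s + 2 + s / m) + 1 := by
        push_cast; ring
      rw [this, Real.Gamma_add_one (ne_of_gt (hX n))]
    have e4 : (((m + n : ℕ) : ℝ) + s) = (m:ℝ) + n + s := by push_cast; ring
    have e5 : (((m + n : ℕ)) : ℝ) = (m:ℝ) + n := by push_cast; ring
    have n2 : Real.Gamma ((m:ℝ) + n + s + 2 + s / m) ≠ 0 := ne_of_gt (hG2 n)
    have n3 : Real.Gamma ((m:ℝ) + s) ≠ 0 := ne_of_gt hGms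
    have n4 : ((m:ℝ) + n + s + 2 + s / m) ≠ 0 := ne_of_gt (hX n)
    have n5 : (m:ℝ) ≠ 0 := ne_of_gt hm0
    have n6 : (m:ℝ) + s ≠ 0 := ne_of_gt hms
    have n7 : 2 * (m:ℝ) + s ≠ 0 := ne_of_gt h2ms
    simp only [hf, hg]
    rw [e1, e2, e3, e4, e5]
    rw [hC, hα, hβ]
    generalize Real.Gamma ((m:ℝ) + n + s) = G1
    generalize Real.Gamma ((m:ℝ) + n + s + 2 + s / m) = G2 at n2 ⊢
    generalize Real.Gamma ((m:ℝ) + s) = GA at n3 ⊢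
    generalize Real.Gamma ((m:ℝ) + s + 2 + s / m) = GB
    have hsc : s = (m:ℝ) * (s / m) := by field_simp
    generalize hcc : s / (m:ℝ) = c at hsc n4 ⊢
    rw [hsc] at n4 n6 n7 ⊢
    have hc1 : -1 < c := by rw [← hcc]; exact hsm
    have n9 : (1:ℝ) + c ≠ 0 := ne_of_gt (by linarith)
    have n10 : (2:ℝ) + c ≠ 0 := ne_of_gt (by linarith)
    field_simp
    push_cast
    ring
  -- value at 0
  have hg0 : g 0 = 2 * m := by
    rw [hg]
    simp only [Nat.cast_zero, add_zero]
    have n3 : Real.Gamma ((m:ℝ) + s) ≠ 0 := ne_of_gt hGms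
    have n8 : Real.Gamma ((m:ℝ) + s + 2 + s / m) ≠ 0 := ne_of_gt hGM
    have n5 : (m:ℝ) ≠ 0 := ne_of_gt hm0
    have n6 : (m:ℝ) + s ≠ 0 := ne_of_gt hms
    have n7 : 2 * (m:ℝ) + s ≠ 0 := ne_of_gt h2ms
    rw [hC, hα, hβ]
    generalize Real.Gamma ((m:ℝ) + s) = GA at n3 ⊢
    generalize Real.Gamma ((m:ℝ) + s + 2 + s / m) = GB at n8 ⊢
    have hsc : s = (m:ℝ) * (s / m) := by field_simp
    generalize hcc : s / (m:ℝ) = c at hsc ⊢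
    rw [hsc] at n6 n7 ⊢
    have hc1 : -1 < c := by rw [← hcc]; exact hsm
    have n9 : (1:ℝ) + c ≠ 0 := ne_of_gt (by linarith)
    have n10 : (2:ℝ) + c ≠ 0 := ne_of_gt (by linarith)
    field_simp
    ring
  -- nonnegativity of terms
  have hfnn : ∀ n : ℕ, 0 ≤ f n := by
    intro n
    rw [hf]
    have h1 : (0:ℝ) ≤ ((m + n : ℕ) : ℝ) := Nat.cast_nonneg _
    have h2 : 0 < Real.Gamma (((m + n : ℕ) : ℝ) + s) := by
      apply Real.Gamma_pos_of_pos; push_cast; have := hx n; linarith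
    have h3 : 0 < Real.Gamma (((m + n : ℕ) : ℝ) + s + 3 + s / m) := by
      apply Real.Gamma_pos_of_pos; push_cast; have := hX n; linarith
    positivity
  -- limit of g is 0
  have hxtop : Tendsto (fun n : ℕ => (m:ℝ) + n + s) atTop atTop := by
    have h1 : Tendsto (fun n : ℕ => (n:ℝ)) atTop atTop := tendsto_natCast_atTop_atTop
    have h2 := tendsto_atTop_add_const_right atTop ((m:ℝ) + s) h1
    refine h2.congr fun n => by ring
  have hglim : Tendsto g atTop (𝓝 0) := by
    set t0 : ℝ := min t (1/2) with ht0def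
    have ht0 : 0 < t0 := lt_min ht (by norm_num)
    have ht0le : t0 ≤ t := min_le_left _ _
    have ht0lt1 : t0 < 1 := lt_of_le_of_lt (min_le_right _ _) (by norm_num)
    set D : ℝ := α + |β - α * s| with hD
    set E : ℝ := C * D with hE
    have hCpos : 0 < C := by rw [hC]; positivity
    have hαpos : 0 < α := by rw [hα]; positivity
    have hDpos : 0 < D := by rw [hD]; positivity
    -- h tends to 0
    have hhlim : Tendsto (fun n : ℕ => E * ((m:ℝ) + n + s + t0) ^ (-t0)) atTop (𝓝 0) := by
      have h1 : Tendsto (fun n : ℕ => (m:ℝ) + n + s + t0) atTop atTop :=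
        tendsto_atTop_add_const_right atTop t0 hxtop
      have h2 := (tendsto_rpow_neg_atTop ht0).comp h1
      have h3 := h2.const_mul E
      simpa using h3
    -- squeeze
    apply squeeze_zero' (g := fun n : ℕ => E * ((m:ℝ) + n + s + t0) ^ (-t0))
    · filter_upwards with n
      rw [hg]
      have hp : 0 < α * ((m:ℝ) + n) + β := by
        have h1 : α * ((m:ℝ) + n) + β
            = ((m:ℝ) * ((2*(m:ℝ)+s) * ((m:ℝ)+n)) + s*(m:ℝ)^2) / ((2*(m:ℝ)+s)*((m:ℝ)+s)) := by
          rw [hα, hβ]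
          rw [div_mul_eq_mul_div, div_add_div _ _ (ne_of_gt hms) (ne_of_gt (by positivity)), div_eq_div_iff (by positivity) (by positivity)]
          ring
        rw [h1]
        apply div_pos
        · have hn : (0:ℝ) ≤ n := Nat.cast_nonneg n
          nlinarith [mul_pos (mul_pos hm0 hm0) hms,
            mul_nonneg (mul_nonneg hn (le_of_lt hm0)) (le_of_lt h2ms)]
        · positivity
      have := hG1 n; have := hG2 n
      positivity
    · filter_upwards [hxtop.eventually_ge_atTop 2] with n hn2
      set y : ℝ := (m:ℝ) + n + s with hy
      have hy0 : 0 < y := hx n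
      have hy1 : (1:ℝ) ≤ y := by linarith
      -- rewrite g n
      have e3 : Real.Gamma (y + 2 + s / m) = (y + t) * Real.Gamma (y + t) := by
        have : y + 2 + s / m = (y + t) + 1 := by rw [hts]; ring
        rw [this, Real.Gamma_add_one]
        nlinarith
      have hGyt : 0 < Real.Gamma (y + t) := Real.Gamma_pos_of_pos (by linarith)
      have hGy : 0 < Real.Gamma y := Real.Gamma_pos_of_pos hy0
      have hGyt0 : 0 < Real.Gamma (y + t0) := Real.Gamma_pos_of_pos (by linarith)
      -- step 1: Hölder
      have holder : Real.Gamma y * y ≤ Real.Gamma (y + t0) * (y + t0) ^ (1 - t0) := by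
        have h1 := Real.Gamma_mul_add_mul_le_rpow_Gamma_mul_rpow_Gamma
          (s := y + t0) (t := y + t0 + 1) (a := t0) (b := 1 - t0)
          (by linarith) (by linarith) ht0 (by linarith) (by ring)
        have harg : t0 * (y + t0) + (1 - t0) * (y + t0 + 1) = y + 1 := by ring
        rw [harg] at h1
        have h2 : Real.Gamma (y + 1) = y * Real.Gamma y :=
          Real.Gamma_add_one (ne_of_gt hy0)
        have h3 : Real.Gamma (y + t0 + 1) = (y + t0) * Real.Gamma (y + t0) :=
          Real.Gamma_add_one (by linarith)
        rw [h2, h3] at h1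
        have h4 : ((y + t0) * Real.Gamma (y + t0)) ^ (1 - t0)
            = (y + t0) ^ (1 - t0) * Real.Gamma (y + t0) ^ (1 - t0) :=
          Real.mul_rpow (by linarith) (le_of_lt hGyt0)
        rw [h4] at h1
        have h5 : Real.Gamma (y + t0) ^ t0 * ((y + t0) ^ (1 - t0) * Real.Gamma (y + t0) ^ (1 - t0))
            = Real.Gamma (y + t0) * (y + t0) ^ (1 - t0) := by
          rw [show Real.Gamma (y + t0) ^ t0 * ((y + t0) ^ (1 - t0) * Real.Gamma (y + t0) ^ (1 - t0))
              = (Real.Gamma (y + t0) ^ t0 * Real.Gamma (y + t0) ^ (1 - t0)) * (y + t0) ^ (1 - t0)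
              by ring]
          rw [← Real.rpow_add hGyt0]
          norm_num
        rw [h5] at h1
        linarith [h1]
      -- step 2: monotonicity
      have mono : Real.Gamma (y + t0) ≤ Real.Gamma (y + t) := by
        rcases eq_or_lt_of_le ht0le with h | h
        · rw [h]
        · exact le_of_lt (Real.Gamma_strictMonoOn_Ici (by simp; linarith) (by simp; linarith)
            (by linarith))
      -- combine: Gamma y ≤ Gamma (y+t) * (y+t0)^(1-t0) / y
      have hGyb : Real.Gamma y ≤ Real.Gamma (y + t) * (y + t0) ^ (1 - t0) / y := by
        rw [le_div_iff₀ hy0]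
        calc Real.Gamma y * y ≤ Real.Gamma (y + t0) * (y + t0) ^ (1 - t0) := holder
          _ ≤ Real.Gamma (y + t) * (y + t0) ^ (1 - t0) := by
              apply mul_le_mul_of_nonneg_right mono
              positivity
      -- bound on prefactor
      have hPbound : α * ((m:ℝ) + n) + β ≤ D * y := by
        have h1 : α * ((m:ℝ) + n) + β = α * y + (β - α * s) := by rw [hy]; ring
        rw [h1, hD]
        have h2 : β - α * s ≤ |β - α * s| := le_abs_self _
        have h3 : |β - α * s| ≤ |β - α * s| * y := le_mul_of_one_le_right (abs_nonneg _) hy1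
        nlinarith
      have hPnn : 0 ≤ α * ((m:ℝ) + n) + β := by
        have h1 : α * ((m:ℝ) + n) + β
            = ((m:ℝ) * ((2*(m:ℝ)+s) * ((m:ℝ)+n)) + s*(m:ℝ)^2) / ((2*(m:ℝ)+s)*((m:ℝ)+s)) := by
          rw [hα, hβ]
          rw [div_mul_eq_mul_div, div_add_div _ _ (ne_of_gt hms) (ne_of_gt (by positivity)), div_eq_div_iff (by positivity) (by positivity)]
          ring
        rw [h1]
        apply div_nonneg
        · have hn : (0:ℝ) ≤ n := Nat.cast_nonneg n
          nlinarith [mul_pos (mul_pos hm0 hm0) hms,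
            mul_nonneg (mul_nonneg hn (le_of_lt hm0)) (le_of_lt h2ms)]
        · positivity
      -- now the chain
      have step1 : g n ≤ C * (α * ((m:ℝ) + n) + β)
          * (Real.Gamma (y + t) * (y + t0) ^ (1 - t0) / y) / ((y + t) * Real.Gamma (y + t)) := by
        rw [hg]
        simp only [← hy]
        rw [e3]
        gcongr
        all_goals first
          | exact mul_nonneg (le_of_lt hCpos) hPnn
          | positivity
          | exact hGyb
      have step2 : C * (α * ((m:ℝ) + n) + β)
          * (Real.Gamma (y + t) * (y + t0) ^ (1 - t0) / y) / ((y + t) * Real.Gamma (y + t))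
          = C * (α * ((m:ℝ) + n) + β) * (y + t0) ^ (1 - t0) / (y * (y + t)) := by
        field_simp
        try ring
      have step3 : C * (α * ((m:ℝ) + n) + β) * (y + t0) ^ (1 - t0) / (y * (y + t))
          ≤ C * (D * y) * (y + t0) ^ (1 - t0) / (y * (y + t)) := by
        gcongr
        all_goals first | exact le_of_lt hCpos | exact hPbound | positivity
      have step4 : C * (D * y) * (y + t0) ^ (1 - t0) / (y * (y + t))
          = C * D * (y + t0) ^ (1 - t0) / (y + t) := by
        field_simp
        try ring
      have step5 : C * D * (y + t0) ^ (1 - t0) / (y + t)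
          ≤ C * D * (y + t0) ^ (1 - t0) / (y + t0) := by
        gcongr
        all_goals first | positivity | linarith
      have step6 : C * D * (y + t0) ^ (1 - t0) / (y + t0) = E * (y + t0) ^ (-t0) := by
        have hyt0 : (0:ℝ) < y + t0 := by linarith
        have h1 : (y + t0) ^ (1 - t0) = (y + t0) * (y + t0) ^ (-t0) := by
          rw [show (1 - t0) = 1 + (-t0) by ring, Real.rpow_add hyt0, Real.rpow_one]
        rw [hE, h1]
        field_simp
        try ring
      calc g n ≤ _ := step1
        _ = _ := step2
        _ ≤ _ := step3
        _ = _ := step4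
        _ ≤ _ := step5
        _ = _ := step6
    · exact hhlim
  -- conclude
  have hsum : HasSum f (g 0) := by
    rw [hasSum_iff_tendsto_nat_of_nonneg hfnn]
    have hps : ∀ n : ℕ, ∑ i ∈ Finset.range n, f i = g 0 - g n := by
      intro n
      calc ∑ i ∈ Finset.range n, f i = ∑ i ∈ Finset.range n, (g i - g (i+1)) :=
            Finset.sum_congr rfl fun i _ => key i
        _ = g 0 - g n := Finset.sum_range_sub' g n
    simp only [hps]
    have := tendsto_const_nhds (α := ℕ) (x := g 0) |>.sub hglim
    simpa using this
  rw [← hf] at *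
  rw [hsum.tsum_eq, hg0]
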